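/- Fix τ > 0, c > 0 and γ > 0, and for ε > 0 small define C̄(τ,c,ε) := C(−τ/ε, c, ε). Then the partial derivatives of C̄ exist for ε > 0 small, and as ε → 0⁺: the partial derivative of C̄ with respect to τ tends to (1/c)e^{−(1+γ)τ/c}; the partial derivative of C̄ with respect to c tends to −(τ/c²)e^{−(1+γ)τ/c}; and the partial derivative of C̄ with respect to ε tends to (τ/c − 2)e^{−(1+γ)τ/c}. -/

import Mathlib

open MeasureTheory Real Filter Set Topology

noncomputable def om1 (γ ε : ℝ) : ℝ := (1 + γ * ε + Real.sqrt ((1 - γ * ε) ^ 2 - 4 * ε)) / 2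

noncomputable def om2 (γ ε : ℝ) : ℝ := (1 + γ * ε - Real.sqrt ((1 - γ * ε) ^ 2 - 4 * ε)) / 2

/-- `C(x,c,ε)`. -/
noncomputable def Cfun (γ x c ε : ℝ) : ℝ :=
  (1 / (om1 γ ε - om2 γ ε)) *
    (((1 - om2 γ ε) / om1 γ ε) * Real.exp (om1 γ ε * x / c)
      - ((1 - om1 γ ε) / om2 γ ε) * Real.exp (om2 γ ε * x / c))

/-- `C̄(τ,c,ε) := C(−τ/ε, c, ε)`. -/
noncomputable def Cbar (γ τ c ε : ℝ) : ℝ := Cfun γ (-τ / ε) c ε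

noncomputable def ss (γ e : ℝ) : ℝ := Real.sqrt ((1 - γ * e) ^ 2 - 4 * e)
noncomputable def sd (γ e : ℝ) : ℝ := (-(2*γ)*(1 - γ*e) - 4) / (2 * ss γ e)
noncomputable def om1d (γ e : ℝ) : ℝ := (γ + sd γ e)/2
noncomputable def om2d (γ e : ℝ) : ℝ := (γ - sd γ e)/2
noncomputable def g1 (γ e : ℝ) : ℝ := (1 - om2 γ e)/(ss γ e * om1 γ e)
noncomputable def g2 (γ e : ℝ) : ℝ := (1 + γ*e + ss γ e)/((1+γ) * ss γ e * (1 - γ*e + ss γ e))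
noncomputable def g1d (γ e : ℝ) : ℝ :=
  ((-om2d γ e) * (ss γ e * om1 γ e) - (1 - om2 γ e) * (sd γ e * om1 γ e + ss γ e * om1d γ e))
    / (ss γ e * om1 γ e)^2
noncomputable def g2d (γ e : ℝ) : ℝ :=
  ((γ + sd γ e) * ((1+γ) * ss γ e * (1 - γ*e + ss γ e))
    - (1 + γ*e + ss γ e) * ((1+γ) * sd γ e * (1 - γ*e + ss γ e) + (1+γ) * ss γ e * (-γ + sd γ e)))
    / ((1+γ) * ss γ e * (1 - γ*e + ss γ e))^2
noncomputable def ee1 (γ τ c e : ℝ) : ℝ := Real.exp (-(1+γ) * (om2 γ e)⁻¹ * τ / c)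
noncomputable def ee2 (γ τ c e : ℝ) : ℝ := Real.exp (-(1+γ) * (om1 γ e)⁻¹ * τ / c)

-- values at 0
@[simp] lemma ss0 (γ : ℝ) : ss γ 0 = 1 := by simp [ss]
@[simp] lemma om1_0 (γ : ℝ) : om1 γ 0 = 1 := by simp [om1]
@[simp] lemma om2_0 (γ : ℝ) : om2 γ 0 = 0 := by simp [om2]
@[simp] lemma sd0 (γ : ℝ) : sd γ 0 = -γ - 2 := by simp [sd]; ring
@[simp] lemma om1d0 (γ : ℝ) : om1d γ 0 = -1 := by simp [om1d]; ring
@[simp] lemma om2d0 (γ : ℝ) : om2d γ 0 = γ + 1 := by simp [om2d]; ring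
@[simp] lemma g1_0 (γ : ℝ) : g1 γ 0 = 1 := by simp [g1]
@[simp] lemma g2_0 (γ : ℝ) (hγ : 0 < γ) : g2 γ 0 = 1/(1+γ) := by
  have h1 : (1:ℝ)+γ ≠ 0 := by positivity
  simp [g2]
  field_simp
@[simp] lemma g2d0 (γ : ℝ) (hγ : 0 < γ) : g2d γ 0 = 2 := by
  have h1 : (1:ℝ)+γ ≠ 0 := by positivity
  simp only [g2d, ss0, sd0]
  field_simp
  ring

section facts
variable {γ e : ℝ} (hγ : 0 < γ) (he : e ∈ Ioo (0:ℝ) (1/(8*(γ+2))))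
include hγ he

lemma hD_pos : (1/4 : ℝ) < (1 - γ*e)^2 - 4*e := by
  obtain ⟨h0, h1⟩ := he
  have h8 : (0:ℝ) < 8*(γ+2) := by linarith
  have h2 : e * (8*(γ+2)) < 1 := (lt_div_iff₀ h8).mp h1
  have hge : γ * e < 1/8 := by nlinarith
  have hee : e < 1/16 := by nlinarith
  nlinarith [sq_nonneg (γ*e), mul_pos hγ h0]

lemma ss_sq : ss γ e ^ 2 = (1 - γ*e)^2 - 4*e :=
  Real.sq_sqrt (by nlinarith [hD_pos hγ he])

lemma ss_half : (1/2 : ℝ) ≤ ss γ e := by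
  have h := hD_pos hγ he
  have : ((1:ℝ)/2) = Real.sqrt ((1/2)^2) := by
    rw [Real.sqrt_sq]; norm_num
  rw [this]
  exact Real.sqrt_le_sqrt (by nlinarith)

lemma ss_pos : 0 < ss γ e := lt_of_lt_of_le (by norm_num) (ss_half hγ he)

lemma om1_pos : 0 < om1 γ e := by
  have := ss_pos hγ he
  have h0 := he.1
  unfold om1; unfold ss at this
  nlinarith [mul_pos hγ h0]

lemma ss_lt : ss γ e < 1 + γ * e := by
  have h0 := he.1
  have hq : (1 - γ*e)^2 - 4*e < (1 + γ*e)^2 := by nlinarith [mul_pos hγ h0]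
  have := Real.sqrt_lt_sqrt (by nlinarith [hD_pos hγ he]) hq
  rwa [Real.sqrt_sq (by nlinarith [mul_pos hγ h0] : (0:ℝ) ≤ 1 + γ*e)] at this

lemma om2_pos : 0 < om2 γ e := by
  have := ss_lt hγ he
  unfold om2; unfold ss at this; linarith

lemma aux_pos : 0 < 1 - γ*e + ss γ e := by
  have h1 := ss_half hγ he
  have h8 : (0:ℝ) < 8*(γ+2) := by linarith
  have h2 : e * (8*(γ+2)) < 1 := (lt_div_iff₀ h8).mp he.2
  have hge : γ * e < 1/8 := by nlinarith [he.1]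
  linarith

lemma om_sub : om1 γ e - om2 γ e = ss γ e := by unfold om1 om2 ss; ring

lemma om_mul : om1 γ e * om2 γ e = e * (1+γ) := by
  have h := ss_sq hγ he
  unfold om1 om2; unfold ss at h
  nlinarith [h]

end facts

section ident
variable {γ τ' c e : ℝ}

lemma cbar_eq (hγ : 0 < γ) (hc : c ≠ 0) (he : e ∈ Ioo (0:ℝ) (1/(8*(γ+2)))) :
    Cbar γ τ' c e = g1 γ e * ee1 γ τ' c e - g2 γ e * ee2 γ τ' c e := by
  have h1 := om1_pos hγ he
  have h2 := om2_pos hγ he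
  have hs := ss_pos hγ he
  have hsq := ss_sq hγ he
  have hmul := om_mul hγ he
  have hsub := om_sub hγ he
  have haux := aux_pos hγ he
  have h1γ : (1:ℝ) + γ ≠ 0 := by positivity
  have he0 : e ≠ 0 := ne_of_gt he.1
  have hexp1 : om1 γ e * (-τ' / e) / c = -(1+γ) * (om2 γ e)⁻¹ * τ' / c := by
    field_simp
    linear_combination (-τ') * hmul
  have hexp2 : om2 γ e * (-τ' / e) / c = -(1+γ) * (om1 γ e)⁻¹ * τ' / c := by
    field_simp
    linear_combination (-τ') * hmul
  unfold Cbar Cfun ee1 ee2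
  rw [hexp1, hexp2, hsub]
  have hg1 : 1 / ss γ e * ((1 - om2 γ e) / om1 γ e) = g1 γ e := by
    unfold g1; field_simp
  have hg2 : 1 / ss γ e * ((1 - om1 γ e) / om2 γ e) = g2 γ e := by
    unfold g2
    rw [div_mul_div_comm, one_mul, div_eq_div_iff (by positivity) (by positivity)]
    unfold om1 om2; unfold ss at hsq ⊢
    linear_combination (-(γ/2) * Real.sqrt ((1-γ*e)^2-4*e)) * hsq
  rw [mul_sub, ← mul_assoc, ← mul_assoc, hg1, hg2]

end ident

section derivs
variable {γ τ c e : ℝ}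

lemma hasDeriv_ss (hγ : 0 < γ) (he : e ∈ Ioo (0:ℝ) (1/(8*(γ+2)))) :
    HasDerivAt (ss γ) (sd γ e) e := by
  have hD : ((1 - γ*e)^2 - 4*e) ≠ 0 := by nlinarith [hD_pos hγ he]
  have hlin : HasDerivAt (fun x : ℝ => 1 - γ*x) (-γ) e := by
    simpa using ((hasDerivAt_id e).const_mul γ).const_sub 1
  have hin : HasDerivAt (fun x : ℝ => (1-γ*x)^2 - 4*x) ((2:ℕ)*(1-γ*e)^1*(-γ) - 4*1) e := by
    have h4 : HasDerivAt (fun x : ℝ => 4*x) (4*1) e := (hasDerivAt_id e).const_mul 4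
    exact (hlin.pow 2).sub h4
  have H := hin.sqrt hD
  unfold ss sd
  convert H using 1
  unfold ss
  push_cast
  ring

lemma hasDeriv_om1 (hγ : 0 < γ) (he : e ∈ Ioo (0:ℝ) (1/(8*(γ+2)))) :
    HasDerivAt (om1 γ) (om1d γ e) e := by
  have hs := hasDeriv_ss hγ he
  unfold ss at hs
  have hlin : HasDerivAt (fun x : ℝ => 1 + γ*x) (γ*1) e := ((hasDerivAt_id e).const_mul γ).const_add 1
  have H := (hlin.add hs).div_const 2
  unfold om1
  refine H.congr_deriv ?_
  unfold om1d
  ring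

lemma hasDeriv_om2 (hγ : 0 < γ) (he : e ∈ Ioo (0:ℝ) (1/(8*(γ+2)))) :
    HasDerivAt (om2 γ) (om2d γ e) e := by
  have hs := hasDeriv_ss hγ he
  unfold ss at hs
  have hlin : HasDerivAt (fun x : ℝ => 1 + γ*x) (γ*1) e := ((hasDerivAt_id e).const_mul γ).const_add 1
  have H := (hlin.sub hs).div_const 2
  unfold om2
  refine H.congr_deriv ?_
  unfold om2d
  ring

lemma hasDeriv_g1 (hγ : 0 < γ) (he : e ∈ Ioo (0:ℝ) (1/(8*(γ+2)))) :
    HasDerivAt (g1 γ) (g1d γ e) e := by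
  have hnum : HasDerivAt (fun x => 1 - om2 γ x) (-om2d γ e) e := (hasDeriv_om2 hγ he).const_sub 1
  have hden : HasDerivAt (fun x => ss γ x * om1 γ x)
      (sd γ e * om1 γ e + ss γ e * om1d γ e) e := (hasDeriv_ss hγ he).mul (hasDeriv_om1 hγ he)
  have hne : ss γ e * om1 γ e ≠ 0 := by 
    have := ss_pos hγ he
    have := om1_pos hγ he
    positivity
  exact hnum.div hden hne

lemma hasDeriv_g2 (hγ : 0 < γ) (he : e ∈ Ioo (0:ℝ) (1/(8*(γ+2)))) :
    HasDerivAt (g2 γ) (g2d γ e) e := by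
  have hs := hasDeriv_ss hγ he
  have hnum : HasDerivAt (fun x => 1 + γ*x + ss γ x) (γ*1 + sd γ e) e :=
    (((hasDerivAt_id e).const_mul γ).const_add 1).add hs
  have haux2 : HasDerivAt (fun x => 1 - γ*x + ss γ x) (-γ + sd γ e) e := by
    have hlin : HasDerivAt (fun x : ℝ => 1 - γ*x) (-γ) e := by
      simpa using ((hasDerivAt_id e).const_mul γ).const_sub 1
    exact hlin.add hs
  have hden : HasDerivAt (fun x => (1+γ) * ss γ x * (1 - γ*x + ss γ x))
      ((1+γ) * sd γ e * (1 - γ*e + ss γ e) + (1+γ) * ss γ e * (-γ + sd γ e)) e :=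
    (hs.const_mul (1+γ)).mul haux2
  have hne : (1+γ) * ss γ e * (1 - γ*e + ss γ e) ≠ 0 := by 
    have := ss_pos hγ he
    have := aux_pos hγ he
    positivity
  have H := hnum.div hden hne
  unfold g2 g2d
  refine H.congr_deriv ?_
  ring

end derivs

section derivs2
variable {γ τ c e : ℝ}

lemma hasDeriv_ee1 (hγ : 0 < γ) (hc : c ≠ 0) (he : e ∈ Ioo (0:ℝ) (1/(8*(γ+2)))) :
    HasDerivAt (ee1 γ τ c)
      (ee1 γ τ c e * (-(1+γ) * (-om2d γ e / om2 γ e ^ 2) * τ / c)) e := by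
  have h2 := om2_pos hγ he
  have hinv : HasDerivAt (fun x => (om2 γ x)⁻¹) (-om2d γ e / om2 γ e ^ 2) e :=
    (hasDeriv_om2 hγ he).inv h2.ne'
  have ht := ((hinv.const_mul (-(1+γ))).mul_const τ).div_const c
  have H := ht.exp
  unfold ee1
  exact H

lemma hasDeriv_ee2 (hγ : 0 < γ) (hc : c ≠ 0) (he : e ∈ Ioo (0:ℝ) (1/(8*(γ+2)))) :
    HasDerivAt (ee2 γ τ c)
      (ee2 γ τ c e * (-(1+γ) * (-om1d γ e / om1 γ e ^ 2) * τ / c)) e := by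
  have h1 := om1_pos hγ he
  have hinv : HasDerivAt (fun x => (om1 γ x)⁻¹) (-om1d γ e / om1 γ e ^ 2) e :=
    (hasDeriv_om1 hγ he).inv h1.ne'
  have ht := ((hinv.const_mul (-(1+γ))).mul_const τ).div_const c
  have H := ht.exp
  unfold ee2
  exact H

end derivs2

-- singular limit
lemma om2_tendsto (γ : ℝ) (hγ : 0 < γ) :
    Tendsto (om2 γ) (𝓝[>] (0:ℝ)) (𝓝[>] (0:ℝ)) := by
  have hcont : Continuous (om2 γ) := by
    unfold om2
    fun_prop
  rw [tendsto_nhdsWithin_iff]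
  constructor
  · have := hcont.continuousAt (x := (0:ℝ))
    simpa using this.tendsto.mono_left nhdsWithin_le_nhds
  · filter_upwards [Ioo_mem_nhdsGT_of_mem (⟨le_refl 0, by positivity⟩ :
      (0:ℝ) ∈ Ico 0 (1/(8*(γ+2))))] with x hx
    exact om2_pos hγ hx

lemma sing (γ K : ℝ) (hγ : 0 < γ) (hK : 0 < K) (n : ℕ) :
    Tendsto (fun e => Real.exp (-(K / om2 γ e)) / om2 γ e ^ n) (𝓝[>] (0:ℝ)) (𝓝 0) := by
  have hdiv : Tendsto (fun e => K / om2 γ e) (𝓝[>] (0:ℝ)) atTop := by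
    have h1 : Tendsto (fun u : ℝ => K * u⁻¹) (𝓝[>] (0:ℝ)) atTop :=
      tendsto_inv_nhdsGT_zero.const_mul_atTop hK
    have := h1.comp (om2_tendsto γ hγ)
    simpa [Function.comp_def, div_eq_mul_inv] using this
  have hmain : Tendsto (fun x : ℝ => x ^ n * Real.exp (-x) / K ^ n) atTop (𝓝 0) := by
    simpa using (Real.tendsto_pow_mul_exp_neg_atTop_nhds_zero n).div_const (K ^ n)
  have H := hmain.comp hdiv
  apply H.congr'
  filter_upwards [(om2_tendsto γ hγ).eventually_mem self_mem_nhdsWithin] with x hx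
  have hx0 : om2 γ x ≠ 0 := ne_of_gt hx
  simp only [Function.comp]
  field_simp
  have h' : om2 γ x ^ n * (om2 γ x)⁻¹ ^ n = 1 := by rw [← mul_pow, mul_inv_cancel₀ hx0, one_pow]
  linear_combination K ^ n * h'

section cont
variable {γ τ c : ℝ}

lemma contAt_ss : ContinuousAt (ss γ) 0 := by unfold ss; fun_prop
lemma contAt_om1 : ContinuousAt (om1 γ) 0 := by unfold om1; fun_prop
lemma contAt_om2 : ContinuousAt (om2 γ) 0 := by unfold om2; fun_prop

lemma contAt_sd : ContinuousAt (sd γ) 0 := by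
  unfold sd
  exact ContinuousAt.div (by fun_prop) (continuousAt_const.mul contAt_ss) (by simp)

lemma contAt_om1d : ContinuousAt (om1d γ) 0 := by
  unfold om1d
  exact (continuousAt_const.add contAt_sd).div_const 2

lemma contAt_om2d : ContinuousAt (om2d γ) 0 := by
  unfold om2d
  exact (continuousAt_const.sub contAt_sd).div_const 2

lemma contAt_g1 : ContinuousAt (g1 γ) 0 := by
  unfold g1
  exact ContinuousAt.div (continuousAt_const.sub contAt_om2) (contAt_ss.mul contAt_om1) (by simp)

lemma contAt_g2 (hγ : 0 < γ) : ContinuousAt (g2 γ) 0 := by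
  unfold g2
  refine ContinuousAt.div (ContinuousAt.add (by fun_prop) contAt_ss)
    ((continuousAt_const.mul contAt_ss).mul (ContinuousAt.add (by fun_prop) contAt_ss)) ?_
  have : (0:ℝ) < (1+γ) * ss γ 0 * (1 - γ*0 + ss γ 0) := by rw [ss0]; nlinarith
  exact this.ne'

lemma contAt_g1d : ContinuousAt (g1d γ) 0 := by
  unfold g1d
  refine ContinuousAt.div
    (((contAt_om2d.neg).mul (contAt_ss.mul contAt_om1)).sub
      ((continuousAt_const.sub contAt_om2).mul
        ((contAt_sd.mul contAt_om1).add (contAt_ss.mul contAt_om1d))))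
    ((contAt_ss.mul contAt_om1).pow 2) (by simp)

lemma contAt_g2d (hγ : 0 < γ) : ContinuousAt (g2d γ) 0 := by
  unfold g2d
  have hden : ContinuousAt (fun e => (1+γ) * ss γ e * (1 - γ*e + ss γ e)) 0 :=
    (continuousAt_const.mul contAt_ss).mul (ContinuousAt.add (by fun_prop) contAt_ss)
  refine ContinuousAt.div
    (((continuousAt_const.add contAt_sd).mul hden).sub
      ((ContinuousAt.add (by fun_prop) contAt_ss).mul
        (((continuousAt_const.mul contAt_sd).mul (ContinuousAt.add (by fun_prop) contAt_ss)).add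
          ((continuousAt_const.mul contAt_ss).mul (continuousAt_const.add contAt_sd)))))
    (hden.pow 2) ?_
  have : (0:ℝ) < ((1+γ) * ss γ 0 * (1 - γ*0 + ss γ 0))^2 := by rw [ss0]; nlinarith
  simpa using this.ne'

lemma contAt_ee2 : ContinuousAt (ee2 γ τ c) 0 := by
  unfold ee2
  refine Real.continuous_exp.continuousAt.comp ?_
  exact (((continuousAt_const.mul (contAt_om1.inv₀ (by simp))).mul continuousAt_const).div_const c)

end cont

theorem statement17 (τ c γ : ℝ) (hτ : 0 < τ) (hc : 0 < c) (hγ : 0 < γ) :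
    ∃ ε₀ > (0:ℝ), ∃ dτ dc de : ℝ → ℝ,
      (∀ ε ∈ Ioo (0:ℝ) ε₀,
        HasDerivAt (fun τ' => Cbar γ τ' c ε) (dτ ε) τ ∧
        HasDerivAt (fun c' => Cbar γ τ c' ε) (dc ε) c ∧
        HasDerivAt (fun ε' => Cbar γ τ c ε') (de ε) ε) ∧
      Tendsto dτ (𝓝[>] (0:ℝ)) (𝓝 ((1 / c) * Real.exp (-(1 + γ) * τ / c))) ∧
      Tendsto dc (𝓝[>] (0:ℝ)) (𝓝 (-(τ / c ^ 2) * Real.exp (-(1 + γ) * τ / c))) ∧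
      Tendsto de (𝓝[>] (0:ℝ)) (𝓝 ((τ / c - 2) * Real.exp (-(1 + γ) * τ / c))) := by
  have hc' : c ≠ 0 := hc.ne'
  have h1γ : (0:ℝ) < 1 + γ := by linarith
  refine ⟨1/(8*(γ+2)), by positivity,
    (fun ε => -((1+γ) * (om2 γ ε)⁻¹ / c) * (g1 γ ε * ee1 γ τ c ε)
       + ((1+γ) * (om1 γ ε)⁻¹ / c) * (g2 γ ε * ee2 γ τ c ε)),
    (fun ε => ((1+γ) * (om2 γ ε)⁻¹ * τ / c^2) * (g1 γ ε * ee1 γ τ c ε)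
       - ((1+γ) * (om1 γ ε)⁻¹ * τ / c^2) * (g2 γ ε * ee2 γ τ c ε)),
    (fun ε => (g1d γ ε * ee1 γ τ c ε
         + ((1+γ) * τ / c * (om2d γ ε / om2 γ ε^2)) * (g1 γ ε * ee1 γ τ c ε))
       - (g2d γ ε * ee2 γ τ c ε
         + ((1+γ) * τ / c * (om1d γ ε / om1 γ ε^2)) * (g2 γ ε * ee2 γ τ c ε))),
    ?_, ?_, ?_, ?_⟩
  · -- derivatives
    intro ε hε
    refine ⟨?_, ?_, ?_⟩
    · -- τ derivative
      have hfe : (fun τ' => Cbar γ τ' c ε)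
          = (fun τ' => g1 γ ε * ee1 γ τ' c ε - g2 γ ε * ee2 γ τ' c ε) :=
        funext fun τ' => cbar_eq hγ hc' hε
      rw [hfe]; unfold ee1 ee2
      have Ha := (((((hasDerivAt_id' (x := τ)).const_mul
            (-(1+γ) * (om2 γ ε)⁻¹)).div_const c).exp).const_mul (g1 γ ε)).sub
        (((((hasDerivAt_id' (x := τ)).const_mul
            (-(1+γ) * (om1 γ ε)⁻¹)).div_const c).exp).const_mul (g2 γ ε))
      refine Ha.congr_deriv ?_
      beta_reduce
      ring
    · -- c derivative
      have hev : (fun c' => Cbar γ τ c' ε)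
          =ᶠ[𝓝 c] (fun c' => g1 γ ε * ee1 γ τ c' ε - g2 γ ε * ee2 γ τ c' ε) := by
        filter_upwards [eventually_ne_nhds hc'] with x hx
        exact cbar_eq hγ hx hε
      have Hn : HasDerivAt (fun c' => g1 γ ε * ee1 γ τ c' ε - g2 γ ε * ee2 γ τ c' ε)
          (((1+γ) * (om2 γ ε)⁻¹ * τ / c^2) * (g1 γ ε * ee1 γ τ c ε)
            - ((1+γ) * (om1 γ ε)⁻¹ * τ / c^2) * (g2 γ ε * ee2 γ τ c ε)) c := by
        unfold ee1 ee2
        have Hb1 := (((hasDerivAt_const c (-(1+γ) * (om2 γ ε)⁻¹ * τ)).div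
              (hasDerivAt_id' (x := c)) hc').exp).const_mul (g1 γ ε)
        have Hb2 := (((hasDerivAt_const c (-(1+γ) * (om1 γ ε)⁻¹ * τ)).div
              (hasDerivAt_id' (x := c)) hc').exp).const_mul (g2 γ ε)
        refine (Hb1.sub Hb2).congr_deriv ?_
        beta_reduce
        simp only [Pi.div_apply]
        field_simp
        ring
      exact Hn.congr_of_eventuallyEq hev
    · -- ε derivative
      have hev : (fun ε' => Cbar γ τ c ε')
          =ᶠ[𝓝 ε] (fun ε' => g1 γ ε' * ee1 γ τ c ε' - g2 γ ε' * ee2 γ τ c ε') := by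
        filter_upwards [isOpen_Ioo.mem_nhds hε] with x hx
        exact cbar_eq hγ hc' hx
      have Hn := ((hasDeriv_g1 hγ hε).mul (hasDeriv_ee1 (τ := τ) hγ hc' hε)).sub
        ((hasDeriv_g2 hγ hε).mul (hasDeriv_ee2 (τ := τ) hγ hc' hε))
      have Hn' : HasDerivAt (fun ε' => g1 γ ε' * ee1 γ τ c ε' - g2 γ ε' * ee2 γ τ c ε')
          ((g1d γ ε * ee1 γ τ c ε
             + ((1+γ) * τ / c * (om2d γ ε / om2 γ ε^2)) * (g1 γ ε * ee1 γ τ c ε))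
           - (g2d γ ε * ee2 γ τ c ε
             + ((1+γ) * τ / c * (om1d γ ε / om1 γ ε^2)) * (g2 γ ε * ee2 γ τ c ε))) ε := by
        refine Hn.congr_deriv ?_
        ring
      exact Hn'.congr_of_eventuallyEq hev
  · -- limit of dτ
    have hT1 : Tendsto (fun x => -((1+γ) * (om2 γ x)⁻¹ / c) * (g1 γ x * ee1 γ τ c x))
        (𝓝[>] (0:ℝ)) (𝓝 0) := by
      have hcont1 : ContinuousAt (fun x => -(1+γ)/c * g1 γ x) 0 := continuousAt_const.mul contAt_g1
      have h := (hcont1.tendsto.mono_left nhdsWithin_le_nhds).mul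
        (sing γ ((1+γ)*τ/c) hγ (by positivity) 1)
      rw [mul_zero] at h
      apply h.congr
      intro x
      unfold ee1
      rw [show -((1+γ)*τ/c / om2 γ x) = -(1+γ) * (om2 γ x)⁻¹ * τ / c by ring]
      ring
    have hcont2 : ContinuousAt (fun x => (1+γ) * (om1 γ x)⁻¹ / c * (g2 γ x * ee2 γ τ c x)) 0 :=
      ((continuousAt_const.mul (contAt_om1.inv₀ (by simp))).div_const c).mul
        ((contAt_g2 hγ).mul contAt_ee2)
    have h := hT1.add (hcont2.tendsto.mono_left nhdsWithin_le_nhds)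
    rw [zero_add] at h
    convert h using 2
    simp only [ee2, om1_0, g2_0 _ hγ, inv_one, mul_one]
    field_simp
  · -- limit of dc
    have hT1 : Tendsto (fun x => (1+γ) * (om2 γ x)⁻¹ * τ / c^2 * (g1 γ x * ee1 γ τ c x))
        (𝓝[>] (0:ℝ)) (𝓝 0) := by
      have hcont1 : ContinuousAt (fun x => (1+γ)*τ/c^2 * g1 γ x) 0 := continuousAt_const.mul contAt_g1
      have h := (hcont1.tendsto.mono_left nhdsWithin_le_nhds).mul
        (sing γ ((1+γ)*τ/c) hγ (by positivity) 1)
      rw [mul_zero] at h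
      apply h.congr
      intro x
      unfold ee1
      rw [show -((1+γ)*τ/c / om2 γ x) = -(1+γ) * (om2 γ x)⁻¹ * τ / c by ring]
      ring
    have hcont2 : ContinuousAt (fun x => (1+γ) * (om1 γ x)⁻¹ * τ / c^2 * (g2 γ x * ee2 γ τ c x)) 0 :=
      (((continuousAt_const.mul (contAt_om1.inv₀ (by simp))).mul continuousAt_const).div_const (c^2)).mul
        ((contAt_g2 hγ).mul contAt_ee2)
    have h := hT1.sub (hcont2.tendsto.mono_left nhdsWithin_le_nhds)
    rw [zero_sub] at h
    convert h using 2
    simp only [ee2, om1_0, g2_0 _ hγ, inv_one, mul_one]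
    field_simp
  · -- limit of de
    have hee1_0 : Tendsto (ee1 γ τ c) (𝓝[>] (0:ℝ)) (𝓝 0) := by
      have h := sing γ ((1+γ)*τ/c) hγ (by positivity) 0
      apply h.congr
      intro x
      unfold ee1
      rw [show -((1+γ)*τ/c / om2 γ x) = -(1+γ) * (om2 γ x)⁻¹ * τ / c by ring]
      simp
    have hA1 : Tendsto (fun x => g1d γ x * ee1 γ τ c x) (𝓝[>] (0:ℝ)) (𝓝 0) := by
      have h := ((contAt_g1d (γ := γ)).tendsto.mono_left nhdsWithin_le_nhds).mul hee1_0
      rwa [mul_zero] at h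
    have hA2 : Tendsto (fun x => (1+γ) * τ / c * (om2d γ x / om2 γ x^2) * (g1 γ x * ee1 γ τ c x))
        (𝓝[>] (0:ℝ)) (𝓝 0) := by
      have hcont1 : ContinuousAt (fun x => (1+γ)*τ/c * om2d γ x * g1 γ x) 0 :=
        (continuousAt_const.mul contAt_om2d).mul contAt_g1
      have h := (hcont1.tendsto.mono_left nhdsWithin_le_nhds).mul
        (sing γ ((1+γ)*τ/c) hγ (by positivity) 2)
      rw [mul_zero] at h
      apply h.congr
      intro x
      unfold ee1
      rw [show -((1+γ)*τ/c / om2 γ x) = -(1+γ) * (om2 γ x)⁻¹ * τ / c by ring]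
      ring
    have hA : Tendsto (fun x => g1d γ x * ee1 γ τ c x
        + (1+γ) * τ / c * (om2d γ x / om2 γ x^2) * (g1 γ x * ee1 γ τ c x)) (𝓝[>] (0:ℝ)) (𝓝 0) := by
      have := hA1.add hA2
      rwa [add_zero] at this
    have hcontB : ContinuousAt (fun x => g2d γ x * ee2 γ τ c x
        + (1+γ) * τ / c * (om1d γ x / om1 γ x^2) * (g2 γ x * ee2 γ τ c x)) 0 :=
      ((contAt_g2d hγ).mul contAt_ee2).add
        ((continuousAt_const.mul (contAt_om1d.div (contAt_om1.pow 2) (by simp))).mul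
          ((contAt_g2 hγ).mul contAt_ee2))
    have h := hA.sub (hcontB.tendsto.mono_left nhdsWithin_le_nhds)
    rw [zero_sub] at h
    convert h using 2
    simp only [ee2, om1_0, om1d0, g2d0 _ hγ, g2_0 _ hγ, inv_one, mul_one]
    field_simp
    ring
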